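/- If every sublocalization overring B of an integral domain A is a localization of A, then for each x in the fraction field K with x ∉ A, the radical of the denominator ideal (A :_A x) is the radical of a principal ideal of A. -/
import Mathlib


/-- The localization `A_P` of a subring `A` of a field `K` at a prime `P`,
viewed as a subset of `K`. -/
def locAt {K : Type*} [Field K] (A : Subring K) (P : Ideal A) : Set K :=
  {x : K | ∃ a s : A, s ∉ P ∧ x = (a : K) / (s : K)}

/-- `B = S⁻¹A` for a multiplicatively closed set `S ⊆ A` of nonzero elements. -/
def IsLocOf {K : Type*} [Field K] (A B : Set K) : Prop :=
  ∃ S : Set K, S ⊆ A ∧ 1 ∈ S ∧ (∀ s ∈ S, ∀ t ∈ S, s * t ∈ S) ∧ (0 : K) ∉ S ∧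
    B = {x : K | ∃ a ∈ A, ∃ s ∈ S, x = a / s}

/-- The denominator ideal `(A :_A x) = {a ∈ A : a * x ∈ A}`. -/
def denomIdeal {K : Type*} [Field K] (A : Subring K) (x : K) : Ideal A where
  carrier := {a : A | (a : K) * x ∈ A}
  add_mem' := by
    intro a b ha hb
    simp only [Set.mem_setOf_eq] at *
    push_cast
    rw [add_mul]
    exact A.add_mem ha hb
  zero_mem' := by
    simp only [Set.mem_setOf_eq]
    push_cast
    rw [zero_mul]
    exact A.zero_mem
  smul_mem' := by
    intro c a ha
    simp only [Set.mem_setOf_eq, smul_eq_mul] at *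
    push_cast
    rw [mul_assoc]
    exact A.mul_mem c.2 ha

lemma coe_ne_zero_of_not_mem {K : Type*} [Field K] {A : Subring K} {P : Ideal A}
    {s : A} (hs : s ∉ P) : (s : K) ≠ 0 := by
  intro h
  apply hs
  have : s = 0 := by exact_mod_cast h
  rw [this]; exact P.zero_mem

/-- `A_P` as a subring of `K`, for `P` prime. -/
def locSubring {K : Type*} [Field K] (A : Subring K) (P : Ideal A) (hP : P.IsPrime) :
    Subring K where
  carrier := locAt A P
  one_mem' := ⟨1, 1, P.ne_top_iff_one.mp hP.ne_top, by push_cast; rw [div_one]⟩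
  zero_mem' := ⟨0, 1, P.ne_top_iff_one.mp hP.ne_top, by push_cast; rw [zero_div]⟩
  mul_mem' := by
    rintro y z ⟨a, s, hs, rfl⟩ ⟨b, t, ht, rfl⟩
    refine ⟨a * b, s * t, fun h => ?_, by push_cast; rw [div_mul_div_comm]⟩
    rcases hP.mem_or_mem h with h | h
    · exact hs h
    · exact ht h
  add_mem' := by
    rintro y z ⟨a, s, hs, rfl⟩ ⟨b, t, ht, rfl⟩
    refine ⟨a * t + s * b, s * t, fun h => ?_, by
      push_cast
      rw [div_add_div _ _ (coe_ne_zero_of_not_mem hs) (coe_ne_zero_of_not_mem ht)]⟩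
    rcases hP.mem_or_mem h with h | h
    · exact hs h
    · exact ht h
  neg_mem' := by
    rintro y ⟨a, s, hs, rfl⟩
    exact ⟨-a, s, hs, by push_cast; rw [neg_div]⟩

theorem stmt7 {K : Type*} [Field K] (A : Subring K)
    (hfrac : ∀ x : K, ∃ a b : A, (b : K) ≠ 0 ∧ x = (a : K) / (b : K))
    (hsub : ∀ B : Subring K, A ≤ B →
      (∃ PP : Set (Ideal A), (∀ P ∈ PP, P.IsPrime) ∧
        ∀ x : K, x ∈ B ↔ ∀ P ∈ PP, x ∈ locAt A P) →
      IsLocOf (A : Set K) (B : Set K)) :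
    ∀ x : K, x ∉ A → ∃ c : A, (denomIdeal A x).radical = (Ideal.span {c}).radical := by
  intro x _hx
  set I := denomIdeal A x with hIdef
  set PP : Set (Ideal A) := {P | P.IsPrime ∧ ¬ I ≤ P} with hPPdef
  -- the intersection of the A_P for P ∈ PP, as a subring
  let B : Subring K :=
  { carrier := {y : K | ∀ P ∈ PP, y ∈ locAt A P}
    one_mem' := fun P hP => (locSubring A P hP.1).one_mem
    zero_mem' := fun P hP => (locSubring A P hP.1).zero_mem
    mul_mem' := fun hy hz P hP => (locSubring A P hP.1).mul_mem (hy P hP) (hz P hP)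
    add_mem' := fun hy hz P hP => (locSubring A P hP.1).add_mem (hy P hP) (hz P hP)
    neg_mem' := fun hy P hP => (locSubring A P hP.1).neg_mem (hy P hP) }
  have hAB : A ≤ B := by
    intro a ha P hP
    exact ⟨⟨a, ha⟩, 1, P.ne_top_iff_one.mp hP.1.ne_top, by push_cast; rw [div_one]⟩
  have hBloc : IsLocOf (A : Set K) (B : Set K) :=
    hsub B hAB ⟨PP, fun P hP => hP.1, fun y => Iff.rfl⟩
  obtain ⟨S, hSA, h1S, _hmulS, h0S, hB⟩ := hBloc
  -- x ∈ B
  have hxB : x ∈ B := by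
    intro P hP
    obtain ⟨s, hsI, hsP⟩ := SetLike.not_le_iff_exists.mp hP.2
    have hsK : (s : K) ≠ 0 := coe_ne_zero_of_not_mem hsP
    refine ⟨⟨(s : K) * x, hsI⟩, s, hsP, ?_⟩
    exact (mul_div_cancel_left₀ x hsK).symm
  have hxB' : x ∈ {y : K | ∃ a ∈ (A : Set K), ∃ s ∈ S, y = a / s} := by
    rw [← hB]; exact hxB
  obtain ⟨a, haA, s, hsS, hxas⟩ := hxB'
  have hsA : s ∈ (A : Set K) := hSA hsS
  have hsK : s ≠ 0 := fun h => h0S (h ▸ hsS)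
  refine ⟨⟨s, hsA⟩, ?_⟩
  have hcI : (⟨s, hsA⟩ : A) ∈ I := by
    show s * x ∈ A
    rw [hxas, mul_comm, div_mul_cancel₀ a hsK]
    exact haA
  apply le_antisymm
  · -- I.radical ≤ (span {c}).radical
    have : I ≤ (Ideal.span {(⟨s, hsA⟩ : A)}).radical := by
      rw [Ideal.radical_eq_sInf]
      apply le_sInf
      rintro P ⟨hcP, hP⟩
      by_contra hnle
      have hPP : P ∈ PP := ⟨hP, hnle⟩
      -- 1/s ∈ B
      have h1s : (1 : K) / s ∈ B := by
        have : (1 : K) / s ∈ {y : K | ∃ a ∈ (A : Set K), ∃ s ∈ S, y = a / s} :=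
          ⟨1, A.one_mem, s, hsS, rfl⟩
        rw [← hB] at this; exact this
      obtain ⟨a', t, htP, heq⟩ := h1s P hPP
      have htK : (t : K) ≠ 0 := coe_ne_zero_of_not_mem htP
      have hts : (1 : K) * (t : K) = (a' : K) * s := (div_eq_div_iff hsK htK).mp heq
      have hteq : t = a' * (⟨s, hsA⟩ : A) := by
        apply Subtype.ext
        push_cast
        rw [← hts, one_mul]
      apply htP
      rw [hteq]
      exact P.mul_mem_left a' (hcP (Ideal.mem_span_singleton_self _))
    calc I.radical ≤ (Ideal.span {(⟨s, hsA⟩ : A)}).radical.radical :=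
          Ideal.radical_mono this
      _ = (Ideal.span {(⟨s, hsA⟩ : A)}).radical := Ideal.radical_idem _
  · exact Ideal.radical_mono (Ideal.span_le.mpr (Set.singleton_subset_iff.mpr hcI))
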